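/- Let R be an ℕ-graded ring, a ∈ R a non-nilpotent element, and let I be a homogeneous (graded) two-sided ideal of R maximal among homogeneous ideals disjoint from {a^n : n ≥ 1}. Then I is a prime ideal of R, i.e. R/I is a prime ring. -/

import Mathlib

open DirectSum

section helpers
variable {R : Type*} [Ring R] (𝒜 : ℕ → AddSubgroup R) [GradedRing 𝒜]



-- homogeneous closure of a two-sided ideal
def hcl (K : TwoSidedIdeal R) : TwoSidedIdeal R :=
  TwoSidedIdeal.mk' {x | ∀ i : ℕ, (decompose 𝒜 x i : R) ∈ K}
    (fun i => by simp [K.zero_mem])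
    (fun {x y} hx hy i => by
      rw [decompose_add]; exact K.add_mem (hx i) (hy i))
    (fun {x} hx i => by
      rw [decompose_neg]; exact K.neg_mem (hx i))
    (fun {x y} hy i => by
      classical
      have hxy : x * y = ∑ j ∈ (decompose 𝒜 y).support, x * (decompose 𝒜 y j : R) := by
        rw [← Finset.mul_sum, DirectSum.sum_support_decompose]
      rw [hxy]
      have : (decompose 𝒜 (∑ j ∈ (decompose 𝒜 y).support, x * (decompose 𝒜 y j : R)) i : R)
          = ∑ j ∈ (decompose 𝒜 y).support,
            (decompose 𝒜 (x * (decompose 𝒜 y j : R)) i : R) := by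
        rw [← GradedRing.proj_apply, map_sum]
        simp [GradedRing.proj_apply]
      rw [this]
      refine K.finsetSum_mem _ _ (fun j _ => ?_)
      rcases le_or_gt j i with h | h
      · rw [coe_decompose_mul_of_right_mem_of_le 𝒜 (SetLike.coe_mem _) h]
        exact K.mul_mem_left _ _ (hy j)
      · rw [coe_decompose_mul_of_right_mem_of_not_le 𝒜 (SetLike.coe_mem _) (not_le.2 h)]
        exact K.zero_mem)
    (fun {x y} hx i => by
      classical
      have hxy : x * y = ∑ j ∈ (decompose 𝒜 x).support, (decompose 𝒜 x j : R) * y := by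
        rw [← Finset.sum_mul, DirectSum.sum_support_decompose]
      rw [hxy]
      have : (decompose 𝒜 (∑ j ∈ (decompose 𝒜 x).support, (decompose 𝒜 x j : R) * y) i : R)
          = ∑ j ∈ (decompose 𝒜 x).support,
            (decompose 𝒜 ((decompose 𝒜 x j : R) * y) i : R) := by
        rw [← GradedRing.proj_apply, map_sum]
        simp [GradedRing.proj_apply]
      rw [this]
      refine K.finsetSum_mem _ _ (fun j _ => ?_)
      rcases le_or_gt j i with h | h
      · rw [coe_decompose_mul_of_left_mem_of_le 𝒜 (SetLike.coe_mem _) h]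
        exact K.mul_mem_right _ _ (hx j)
      · rw [coe_decompose_mul_of_left_mem_of_not_le 𝒜 (SetLike.coe_mem _) (not_le.2 h)]
        exact K.zero_mem)

lemma mem_hcl (K : TwoSidedIdeal R) (x : R) :
    x ∈ hcl 𝒜 K ↔ ∀ i : ℕ, (decompose 𝒜 x i : R) ∈ K :=
  TwoSidedIdeal.mem_mk' _ _ _ _ _ _ _

lemma hcl_le (K : TwoSidedIdeal R) : hcl 𝒜 K ≤ K := by
  classical
  intro x hx
  rw [mem_hcl] at hx
  rw [← DirectSum.sum_support_decompose 𝒜 x]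
  exact K.finsetSum_mem _ _ fun i _ => hx i


lemma span_mul_span_mem (I : TwoSidedIdeal R) (b c : R) (hbc : ∀ r : R, b * r * c ∈ I) :
    ∀ u ∈ TwoSidedIdeal.span {b}, ∀ v ∈ TwoSidedIdeal.span {c}, u * v ∈ I := by
  intro u hu v hv
  rw [TwoSidedIdeal.mem_span_iff_mem_addSubgroup_closure] at hu hv
  induction hu using AddSubgroup.closure_induction with
  | mem g hg =>
      obtain ⟨rb, hrb, s, -, rfl⟩ := hg
      obtain ⟨r, -, b', hb', rfl⟩ := hrb
      induction hv using AddSubgroup.closure_induction with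
      | mem g' hg' =>
          obtain ⟨rc, hrc, w, -, rfl⟩ := hg'
          obtain ⟨t, -, c', hc', rfl⟩ := hrc
          rw [Set.mem_singleton_iff] at hb' hc'
          subst hb'; subst hc'
          have : r * b' * s * (t * c' * w) = r * ((b' * (s * t) * c') * w) := by
            simp only [mul_assoc]
          rw [this]
          exact I.mul_mem_left _ _ (I.mul_mem_right _ _ (hbc (s * t)))
      | zero => rw [mul_zero]; exact I.zero_mem
      | add v₁ v₂ _ _ ih₁ ih₂ => rw [mul_add]; exact I.add_mem ih₁ ih₂
      | neg v₁ _ ih => rw [mul_neg]; exact I.neg_mem ih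
  | zero => rw [zero_mul]; exact I.zero_mem
  | add u₁ u₂ _ _ ih₁ ih₂ => rw [add_mul]; exact I.add_mem ih₁ ih₂
  | neg u₁ _ ih => rw [neg_mul]; exact I.neg_mem ih

lemma top_comp (x y : R) (m n : ℕ)
    (hx : ∀ i, m < i → (decompose 𝒜 x i : R) = 0)
    (hy : ∀ j, n < j → (decompose 𝒜 y j : R) = 0) :
    (decompose 𝒜 (x * y) (m + n) : R) = (decompose 𝒜 x m : R) * (decompose 𝒜 y n : R) := by
  classical
  have hxy : x * y = ∑ j ∈ (decompose 𝒜 y).support, x * (decompose 𝒜 y j : R) := by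
    rw [← Finset.mul_sum, DirectSum.sum_support_decompose]
  have hsum : (decompose 𝒜 (x * y) (m + n) : R)
      = ∑ j ∈ (decompose 𝒜 y).support, (decompose 𝒜 (x * (decompose 𝒜 y j : R)) (m + n) : R) := by
    rw [hxy, ← GradedRing.proj_apply, map_sum]
    simp [GradedRing.proj_apply]
  rw [hsum]
  have hterm : ∀ j ∈ (decompose 𝒜 y).support,
      (decompose 𝒜 (x * (decompose 𝒜 y j : R)) (m + n) : R)
        = if j = n then (decompose 𝒜 x m : R) * (decompose 𝒜 y j : R) else 0 := by
    intro j hj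
    rw [DFinsupp.mem_support_iff] at hj
    have hjn : j ≤ n := by
      by_contra h
      exact hj (Subtype.ext (by simpa using hy j (by omega)))
    rw [coe_decompose_mul_of_right_mem_of_le 𝒜 (SetLike.coe_mem _) (by omega : j ≤ m + n)]
    by_cases hje : j = n
    · subst hje; rw [if_pos rfl, Nat.add_sub_cancel]
    · rw [hx (m + n - j) (by omega), zero_mul, if_neg hje]
  rw [Finset.sum_congr rfl hterm, Finset.sum_ite_eq' _ n _]
  by_cases hn : n ∈ (decompose 𝒜 y).support
  · rw [if_pos hn]
  · rw [if_neg hn]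
    rw [DFinsupp.notMem_support_iff] at hn
    rw [hn]
    simp

lemma exists_pow_mem (a : R) (I : TwoSidedIdeal R)
    (hhom : ∀ f ∈ I, ∀ n : ℕ, (DirectSum.decompose 𝒜 f n : R) ∈ I)
    (hmax : ∀ J : TwoSidedIdeal R, (∀ f ∈ J, ∀ n : ℕ, (DirectSum.decompose 𝒜 f n : R) ∈ J) →
      (∀ n : ℕ, 1 ≤ n → a ^ n ∉ J) → I ≤ J → J = I)
    (b : R) (m : ℕ) (hb : b ∈ 𝒜 m) (hbI : b ∉ I) :
    ∃ k : ℕ, 1 ≤ k ∧ a ^ k ∈ I ⊔ TwoSidedIdeal.span {b} := by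
  set K := I ⊔ TwoSidedIdeal.span {b} with hK
  set J := hcl 𝒜 K with hJ
  by_contra h
  push_neg at h
  have hJhom : ∀ f ∈ J, ∀ n : ℕ, (decompose 𝒜 f n : R) ∈ J := by
    intro f hf n
    rw [hJ, mem_hcl] at hf ⊢
    intro i
    by_cases hi : i = n
    · subst hi; rw [decompose_of_mem_same 𝒜 (SetLike.coe_mem _)]; exact hf i
    · rw [decompose_of_mem_ne 𝒜 (SetLike.coe_mem _) (Ne.symm hi)]; exact K.zero_mem
  have havoid : ∀ n : ℕ, 1 ≤ n → a ^ n ∉ J := by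
    intro n hn hmem
    exact h n hn (hcl_le 𝒜 K hmem)
  have hIJ : I ≤ J := by
    intro x hx
    rw [hJ, mem_hcl]
    exact fun i => TwoSidedIdeal.mem_sup_left (hhom x hx i)
  have hJI := hmax J hJhom havoid hIJ
  apply hbI
  rw [← hJI, hJ, mem_hcl]
  intro i
  by_cases hi : i = m
  · subst hi; rw [decompose_of_mem_same 𝒜 hb]
    exact TwoSidedIdeal.mem_sup_right (TwoSidedIdeal.subset_span rfl)
  · rw [decompose_of_mem_ne 𝒜 hb (Ne.symm hi)]; exact K.zero_mem

lemma key_homogeneous (a : R) (I : TwoSidedIdeal R)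
    (hhom : ∀ f ∈ I, ∀ n : ℕ, (DirectSum.decompose 𝒜 f n : R) ∈ I)
    (hdisj : ∀ n : ℕ, 1 ≤ n → a ^ n ∉ I)
    (hmax : ∀ J : TwoSidedIdeal R, (∀ f ∈ J, ∀ n : ℕ, (DirectSum.decompose 𝒜 f n : R) ∈ J) →
      (∀ n : ℕ, 1 ≤ n → a ^ n ∉ J) → I ≤ J → J = I)
    (b c : R) (m n : ℕ) (hb : b ∈ 𝒜 m) (hc : c ∈ 𝒜 n)
    (hbc : ∀ r : R, b * r * c ∈ I) : b ∈ I ∨ c ∈ I := by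
  by_contra hcon
  push_neg at hcon
  obtain ⟨k₁, hk₁, hak₁⟩ := exists_pow_mem 𝒜 a I hhom hmax b m hb hcon.1
  obtain ⟨k₂, hk₂, hak₂⟩ := exists_pow_mem 𝒜 a I hhom hmax c n hc hcon.2
  refine hdisj (k₁ + k₂) (by omega) ?_
  rw [pow_add]
  rw [TwoSidedIdeal.mem_sup] at hak₁ hak₂
  obtain ⟨i₁, hi₁, u, hu, heq₁⟩ := hak₁
  obtain ⟨i₂, hi₂, v, hv, heq₂⟩ := hak₂
  rw [← heq₁, ← heq₂]
  have hexp : (i₁ + u) * (i₂ + v) = i₁ * (i₂ + v) + u * i₂ + u * v := by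
    rw [add_mul, mul_add u i₂ v, add_assoc]
  rw [hexp]
  refine I.add_mem (I.add_mem (I.mul_mem_right _ _ hi₁) (I.mul_mem_left _ _ hi₂)) ?_
  exact span_mul_span_mem I b c hbc u hu v hv
end helpers

/-- A homogeneous two-sided ideal of an ℕ-graded ring, maximal among homogeneous
ideals disjoint from the powers of a non-nilpotent element, is prime. -/
theorem homogeneous_maximal_disjoint_powers_prime {R : Type*} [Ring R]
    (𝒜 : ℕ → AddSubgroup R) [GradedRing 𝒜]
    (a : R) (ha : ¬IsNilpotent a)
    (I : TwoSidedIdeal R)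
    (hhom : ∀ f ∈ I, ∀ n : ℕ, (DirectSum.decompose 𝒜 f n : R) ∈ I)
    (hdisj : ∀ n : ℕ, 1 ≤ n → a ^ n ∉ I)
    (hmax : ∀ J : TwoSidedIdeal R, (∀ f ∈ J, ∀ n : ℕ, (DirectSum.decompose 𝒜 f n : R) ∈ J) →
      (∀ n : ℕ, 1 ≤ n → a ^ n ∉ J) → I ≤ J → J = I) :
    ∀ p q : R, (∀ r : R, p * r * q ∈ I) → p ∈ I ∨ q ∈ I := by
  classical
  -- auxiliary facts
  have mem_supp : ∀ (f : R) (i : ℕ),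
      i ∉ (decompose 𝒜 f).support → (decompose 𝒜 f i : R) = 0 := by
    intro f i hi
    rw [DFinsupp.notMem_support_iff] at hi
    rw [hi]; rfl
  have coe_sub : ∀ (x y : R) (i : ℕ),
      (decompose 𝒜 (x - y) i : R) = (decompose 𝒜 x i : R) - (decompose 𝒜 y i : R) := by
    intro x y i
    rw [← GradedRing.proj_apply, ← GradedRing.proj_apply, ← GradedRing.proj_apply, map_sub]
  suffices H : ∀ N : ℕ, ∀ p q : R,
      (decompose 𝒜 p).support.card + (decompose 𝒜 q).support.card ≤ N →
      (∀ r : R, p * r * q ∈ I) → p ∈ I ∨ q ∈ I by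
    intro p q hpq
    exact H _ p q le_rfl hpq
  intro N
  induction N with
  | zero =>
    intro p q hcard _
    left
    have hsupp : (decompose 𝒜 p).support = ∅ := by
      have := Nat.le_zero.1 hcard
      exact Finset.card_eq_zero.1 (by omega)
    rw [← DirectSum.sum_support_decompose 𝒜 p, hsupp, Finset.sum_empty]
    exact I.zero_mem
  | succ N ih =>
    intro p q hcard hpq
    by_cases hp : p ∈ I
    · exact Or.inl hp
    by_cases hq : q ∈ I
    · exact Or.inr hq
    -- supports are nonempty
    have hpne : (decompose 𝒜 p).support.Nonempty := by
      rw [Finset.nonempty_iff_ne_empty]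
      intro hE
      exact hp (by
        rw [← DirectSum.sum_support_decompose 𝒜 p, hE, Finset.sum_empty]; exact I.zero_mem)
    have hqne : (decompose 𝒜 q).support.Nonempty := by
      rw [Finset.nonempty_iff_ne_empty]
      intro hE
      exact hq (by
        rw [← DirectSum.sum_support_decompose 𝒜 q, hE, Finset.sum_empty]; exact I.zero_mem)
    set m := (decompose 𝒜 p).support.max' hpne with hm
    set n := (decompose 𝒜 q).support.max' hqne with hn
    have hmmem : m ∈ (decompose 𝒜 p).support := Finset.max'_mem _ _
    have hnmem : n ∈ (decompose 𝒜 q).support := Finset.max'_mem _ _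
    have hptop : ∀ i, m < i → (decompose 𝒜 p i : R) = 0 := by
      intro i hi
      refine mem_supp p i fun hmem => ?_
      exact absurd (Finset.le_max' _ _ hmem) (by omega)
    have hqtop : ∀ j, n < j → (decompose 𝒜 q j : R) = 0 := by
      intro j hj
      refine mem_supp q j fun hmem => ?_
      exact absurd (Finset.le_max' _ _ hmem) (by omega)
    set pm : R := (decompose 𝒜 p m : R) with hpm
    set qn : R := (decompose 𝒜 q n : R) with hqn
    -- the top components satisfy pm * r * qn ∈ I for all r
    have htop : ∀ r : R, pm * r * qn ∈ I := by
      intro r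
      have hr : pm * r * qn
          = ∑ k ∈ (decompose 𝒜 r).support, pm * (decompose 𝒜 r k : R) * qn := by
        conv_lhs => rw [← DirectSum.sum_support_decompose 𝒜 r]
        rw [Finset.mul_sum, Finset.sum_mul]
      rw [hr]
      refine I.finsetSum_mem _ _ fun k _ => ?_
      set rk : R := (decompose 𝒜 r k : R) with hrk
      have hrkmem : rk ∈ 𝒜 k := SetLike.coe_mem _
      have h1 : ∀ i, m + k < i → (decompose 𝒜 (p * rk) i : R) = 0 := by
        intro i hi
        rcases le_or_gt k i with h | h
        · rw [coe_decompose_mul_of_right_mem_of_le 𝒜 hrkmem h, hptop (i - k) (by omega),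
            zero_mul]
        · rw [coe_decompose_mul_of_right_mem_of_not_le 𝒜 hrkmem (by omega)]
      have h2 : (decompose 𝒜 (p * rk) (m + k) : R) = pm * rk := by
        have := top_comp 𝒜 p rk m k hptop
          (fun j hj => decompose_of_mem_ne 𝒜 hrkmem (by omega))
        rwa [decompose_of_mem_same 𝒜 hrkmem] at this
      have h3 : (decompose 𝒜 (p * rk * q) (m + k + n) : R) = pm * rk * qn := by
        rw [top_comp 𝒜 (p * rk) q (m + k) n h1 hqtop, h2]
      rw [← h3]
      exact hhom _ (hpq rk) _
    -- apply the key homogeneous lemma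
    rcases key_homogeneous 𝒜 a I hhom hdisj hmax pm qn m n (SetLike.coe_mem _)
      (SetLike.coe_mem _) htop with hpmI | hqnI
    · -- pm ∈ I : strip the top component of p
      set p' := p - pm with hp'
      have hp'q : ∀ r : R, p' * r * q ∈ I := by
        intro r
        rw [hp', sub_mul, sub_mul]
        exact I.sub_mem (hpq r) (I.mul_mem_right _ _ (I.mul_mem_right _ _ hpmI))
      have hsub : (decompose 𝒜 p').support ⊆ (decompose 𝒜 p).support.erase m := by
        intro i hi
        rw [DFinsupp.mem_support_iff] at hi
        have hdi : (decompose 𝒜 p' i : R) = (decompose 𝒜 p i : R) - (decompose 𝒜 pm i : R) :=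
          coe_sub p pm i
        have him : i ≠ m := by
          rintro rfl
          apply hi
          apply Subtype.ext
          rw [hdi, decompose_of_mem_same 𝒜 (SetLike.coe_mem _)]
          simp
        rw [Finset.mem_erase, DFinsupp.mem_support_iff]
        refine ⟨him, fun hzero => hi ?_⟩
        apply Subtype.ext
        rw [hdi, decompose_of_mem_ne 𝒜 (SetLike.coe_mem _) (Ne.symm him), sub_zero, hzero]
      have hcard' : (decompose 𝒜 p').support.card + (decompose 𝒜 q).support.card ≤ N := by
        have h1 : (decompose 𝒜 p').support.card ≤ (decompose 𝒜 p).support.card - 1 := by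
          calc (decompose 𝒜 p').support.card ≤ ((decompose 𝒜 p).support.erase m).card :=
                Finset.card_le_card hsub
            _ = (decompose 𝒜 p).support.card - 1 := Finset.card_erase_of_mem hmmem
        have h2 : 1 ≤ (decompose 𝒜 p).support.card := Finset.card_pos.2 hpne
        omega
      rcases ih p' q hcard' hp'q with hp'I | hqI
      · left
        have : p = p' + pm := by rw [hp']; abel
        rw [this]
        exact I.add_mem hp'I hpmI
      · exact Or.inr hqI
    · -- qn ∈ I : strip the top component of q
      set q' := q - qn with hq'
      have hpq' : ∀ r : R, p * r * q' ∈ I := by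
        intro r
        rw [hq', mul_sub]
        exact I.sub_mem (hpq r) (I.mul_mem_left _ _ hqnI)
      have hsub : (decompose 𝒜 q').support ⊆ (decompose 𝒜 q).support.erase n := by
        intro i hi
        rw [DFinsupp.mem_support_iff] at hi
        have hdi : (decompose 𝒜 q' i : R) = (decompose 𝒜 q i : R) - (decompose 𝒜 qn i : R) :=
          coe_sub q qn i
        have hin : i ≠ n := by
          rintro rfl
          apply hi
          apply Subtype.ext
          rw [hdi, decompose_of_mem_same 𝒜 (SetLike.coe_mem _)]
          simp
        rw [Finset.mem_erase, DFinsupp.mem_support_iff]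
        refine ⟨hin, fun hzero => hi ?_⟩
        apply Subtype.ext
        rw [hdi, decompose_of_mem_ne 𝒜 (SetLike.coe_mem _) (Ne.symm hin), sub_zero, hzero]
      have hcard' : (decompose 𝒜 p).support.card + (decompose 𝒜 q').support.card ≤ N := by
        have h1 : (decompose 𝒜 q').support.card ≤ (decompose 𝒜 q).support.card - 1 := by
          calc (decompose 𝒜 q').support.card ≤ ((decompose 𝒜 q).support.erase n).card :=
                Finset.card_le_card hsub
            _ = (decompose 𝒜 q).support.card - 1 := Finset.card_erase_of_mem hnmem
        have h2 : 1 ≤ (decompose 𝒜 q).support.card := Finset.card_pos.2 hqne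
        omega
      rcases ih p q' hcard' hpq' with hpI | hq'I
      · exact Or.inl hpI
      · right
        have : q = q' + qn := by rw [hq']; abel
        rw [this]
        exact I.add_mem hq'I hqnI
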